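/- Let T be a bistrong graded monad on a monoidal category C, let f : A ⟶ A' be a morphism of C with pure Kleisli 1-cell f̃, and let (e, g) : B ⇝ B' be a Kleisli 1-cell. Writing ; for Kleisli composition, the composite (f̃ ⋉ B) ; (A' ⋊ (e, g)) : A ⊗ B ⇝ A' ⊗ B' (of grade 𝟙 ⊗ e) and the composite (A ⋊ (e, g)) ; (f̃ ⋉ B') (of grade e ⊗ 𝟙) agree after regrading along the unitors of E: [underlying morphism of (f̃ ⋉ B) ; (A' ⋊ (e, g))] ≫ (T.map ((λ_e).hom)).app (A' ⊗ B') = [underlying morphism of (A ⋊ (e, g)) ; (f̃ ⋉ B')] ≫ (T.map ((ρ_e).hom)).app (A' ⊗ B'). (Pure 1-cells are left-central in the Kleisli bicategory of a bistrong graded monad.) -/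

import Mathlib

open CategoryTheory Category MonoidalCategory

universe v₁ v₂ u₁ u₂

/-- A graded monad on a category `C` with grades in a monoidal category `E`:
a lax monoidal functor `T : E ⥤ (C ⥤ C)` where `C ⥤ C` is monoidal under composition,
so that `μ e e' : T_e ∘ T_{e'} ⟶ T_{e ⊗ e'}` with `(T_e ∘ T_{e'}) X = T_e (T_{e'} X)`. -/
structure GradedMonad (E : Type u₁) [Category.{v₁} E] [MonoidalCategory E]
    (C : Type u₂) [Category.{v₂} C] where
  T : E ⥤ C ⥤ C
  ε : 𝟭 C ⟶ T.obj (𝟙_ E)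
  μ : ∀ e e' : E, (T.obj e' ⋙ T.obj e) ⟶ T.obj (e ⊗ e')
  μ_natural : ∀ {e d e' d' : E} (γ : e ⟶ d) (δ : e' ⟶ d') (X : C),
    (T.map γ).app ((T.obj e').obj X) ≫ (T.obj d).map ((T.map δ).app X) ≫ (μ d d').app X =
      (μ e e').app X ≫ (T.map (γ ⊗ₘ δ)).app X
  left_unit : ∀ (e : E) (X : C),
    ε.app ((T.obj e).obj X) ≫ (μ (𝟙_ E) e).app X = (T.map (λ_ e).inv).app X
  right_unit : ∀ (e : E) (X : C),
    (T.obj e).map (ε.app X) ≫ (μ e (𝟙_ E)).app X = (T.map (ρ_ e).inv).app X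
  assoc : ∀ (e e' e'' : E) (X : C),
    (μ e e').app ((T.obj e'').obj X) ≫ (μ (e ⊗ e') e'').app X ≫
        (T.map (α_ e e' e'').hom).app X =
      (T.obj e).map ((μ e' e'').app X) ≫ (μ e (e' ⊗ e'')).app X

/-- A bistrong graded monad on a monoidal category `C`: a graded monad equipped with a
left strength `t` and a right strength `s`, natural in both objects and in the grade,
compatible with the unit `ε` and multiplication `μ` of the graded monad. -/
structure BistrongGradedMonad (E : Type u₁) [Category.{v₁} E] [MonoidalCategory E]
    (C : Type u₂) [Category.{v₂} C] [MonoidalCategory C] extends GradedMonad E C where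
  t : ∀ (e : E) (A B : C), A ⊗ (T.obj e).obj B ⟶ (T.obj e).obj (A ⊗ B)
  s : ∀ (e : E) (A B : C), (T.obj e).obj A ⊗ B ⟶ (T.obj e).obj (A ⊗ B)
  t_natural_left : ∀ (e : E) {A A' : C} (u : A ⟶ A') (B : C),
    (u ▷ (T.obj e).obj B) ≫ t e A' B = t e A B ≫ (T.obj e).map (u ▷ B)
  t_natural_right : ∀ (e : E) (A : C) {B B' : C} (v : B ⟶ B'),
    (A ◁ (T.obj e).map v) ≫ t e A B' = t e A B ≫ (T.obj e).map (A ◁ v)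
  t_natural_grade : ∀ {e e' : E} (γ : e ⟶ e') (A B : C),
    (A ◁ (T.map γ).app B) ≫ t e' A B = t e A B ≫ (T.map γ).app (A ⊗ B)
  s_natural_left : ∀ (e : E) {A A' : C} (u : A ⟶ A') (B : C),
    ((T.obj e).map u ▷ B) ≫ s e A' B = s e A B ≫ (T.obj e).map (u ▷ B)
  s_natural_right : ∀ (e : E) (A : C) {B B' : C} (v : B ⟶ B'),
    ((T.obj e).obj A ◁ v) ≫ s e A B' = s e A B ≫ (T.obj e).map (A ◁ v)
  s_natural_grade : ∀ {e e' : E} (γ : e ⟶ e') (A B : C),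
    ((T.map γ).app A ▷ B) ≫ s e' A B = s e A B ≫ (T.map γ).app (A ⊗ B)
  t_unit : ∀ A B : C, (A ◁ ε.app B) ≫ t (𝟙_ E) A B = ε.app (A ⊗ B)
  s_unit : ∀ A B : C, (ε.app A ▷ B) ≫ s (𝟙_ E) A B = ε.app (A ⊗ B)
  t_mul : ∀ (e e' : E) (A B : C),
    (A ◁ (μ e e').app B) ≫ t (e ⊗ e') A B =
      t e A ((T.obj e').obj B) ≫ (T.obj e).map (t e' A B) ≫ (μ e e').app (A ⊗ B)
  s_mul : ∀ (e e' : E) (A B : C),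
    ((μ e e').app A ▷ B) ≫ s (e ⊗ e') A B =
      s e ((T.obj e').obj A) B ≫ (T.obj e).map (s e' A B) ≫ (μ e e').app (A ⊗ B)

/-- Pure 1-cells are left-central in the Kleisli bicategory of a bistrong graded monad:
for a pure 1-cell `f̃` and any Kleisli 1-cell `(e, g)`, the two whiskered composites
`(f̃ ⋉ B) ; (A' ⋊ (e, g))` and `(A ⋊ (e, g)) ; (f̃ ⋉ B')` agree after regrading along
the unitors of `E`. -/
theorem BistrongGradedMonad.pure_left_central {E : Type u₁} [Category.{v₁} E]
    [MonoidalCategory E] {C : Type u₂} [Category.{v₂} C] [MonoidalCategory C]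
    (M : BistrongGradedMonad E C)
    {A A' B B' : C} {e : E} (f : A ⟶ A') (g : B ⟶ (M.T.obj e).obj B') :
    (((f ≫ M.ε.app A') ▷ B) ≫ M.s (𝟙_ E) A' B) ≫
        (M.T.obj (𝟙_ E)).map ((A' ◁ g) ≫ M.t e A' B') ≫
        (M.μ (𝟙_ E) e).app (A' ⊗ B') ≫ (M.T.map (λ_ e).hom).app (A' ⊗ B') =
      ((A ◁ g) ≫ M.t e A B') ≫
        (M.T.obj e).map (((f ≫ M.ε.app A') ▷ B') ≫ M.s (𝟙_ E) A' B') ≫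
        (M.μ e (𝟙_ E)).app (A' ⊗ B') ≫ (M.T.map (ρ_ e).hom).app (A' ⊗ B') := by
  have lhs : (((f ≫ M.ε.app A') ▷ B) ≫ M.s (𝟙_ E) A' B) ≫
      (M.T.obj (𝟙_ E)).map ((A' ◁ g) ≫ M.t e A' B') ≫
      (M.μ (𝟙_ E) e).app (A' ⊗ B') ≫ (M.T.map (λ_ e).hom).app (A' ⊗ B') =
      (f ▷ B) ≫ (A' ◁ g) ≫ M.t e A' B' := by
    rw [comp_whiskerRight]
    slice_lhs 2 3 => rw [M.s_unit]
    slice_lhs 2 3 => rw [← M.ε.naturality]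
    slice_lhs 3 4 => rw [M.left_unit]
    rw [← NatTrans.comp_app, ← M.T.map_comp, Iso.inv_hom_id, M.T.map_id]
    simp
  have rhs : ((A ◁ g) ≫ M.t e A B') ≫
      (M.T.obj e).map (((f ≫ M.ε.app A') ▷ B') ≫ M.s (𝟙_ E) A' B') ≫
      (M.μ e (𝟙_ E)).app (A' ⊗ B') ≫ (M.T.map (ρ_ e).hom).app (A' ⊗ B') =
      (A ◁ g) ≫ M.t e A B' ≫ (M.T.obj e).map (f ▷ B') := by
    rw [comp_whiskerRight, assoc (f ▷ B') (M.ε.app A' ▷ B') (M.s (𝟙_ E) A' B'),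
      M.s_unit, Functor.map_comp]
    slice_lhs 4 5 => rw [M.right_unit]
    rw [← NatTrans.comp_app, ← M.T.map_comp, Iso.inv_hom_id, M.T.map_id]
    simp
  rw [lhs, rhs, ← M.t_natural_left, ← whisker_exchange_assoc]
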